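/- Let u > 0 and let w : ℝ → ℝ be twice differentiable on (0,∞) with w″(ζ) = u²·ζ·w(ζ) for all ζ > 0. Define y(ζ) = ζ^{−1/2}·w′(ζ) for ζ > 0. Then y is twice differentiable on (0,∞) and y″(ζ) = (u²·ζ + 3/(4ζ²))·y(ζ) for all ζ > 0. -/

import Mathlib

open Real

/-- Let `u > 0` and let `w` be twice differentiable on `(0,∞)`
with `w'' (ζ) = u²·ζ·w(ζ)` there. Then `y(ζ) = ζ^{-1/2}·w'(ζ)` is twice
differentiable on `(0,∞)` and satisfies
`y''(ζ) = (u²·ζ + 3/(4ζ²))·y(ζ)` for all `ζ > 0`. -/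
theorem stmt10
    (u : ℝ) (hu : 0 < u) (w : ℝ → ℝ)
    (hw : DifferentiableOn ℝ w (Set.Ioi 0))
    (hw' : DifferentiableOn ℝ (deriv w) (Set.Ioi 0))
    (hode : ∀ ζ ∈ Set.Ioi (0:ℝ), deriv (deriv w) ζ = u^2 * ζ * w ζ)
    (y : ℝ → ℝ)
    (hy : ∀ ζ ∈ Set.Ioi (0:ℝ), y ζ = ζ ^ (-(1:ℝ)/2) * deriv w ζ) :
    DifferentiableOn ℝ y (Set.Ioi 0) ∧
    DifferentiableOn ℝ (deriv y) (Set.Ioi 0) ∧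
    ∀ ζ ∈ Set.Ioi (0:ℝ),
      deriv (deriv y) ζ = (u^2 * ζ + 3 / (4 * ζ^2)) * y ζ := by
  -- first derivative candidate
  set f1 : ℝ → ℝ := fun ζ =>
    (-(1:ℝ)/2) * ζ ^ (-(1:ℝ)/2 - 1) * deriv w ζ + ζ ^ (-(1:ℝ)/2) * (u^2 * ζ * w ζ) with hf1
  have hWdd : ∀ ζ ∈ Set.Ioi (0:ℝ), HasDerivAt (deriv w) (u^2 * ζ * w ζ) ζ := by
    intro ζ hζ
    have h := (hw'.differentiableAt (Ioi_mem_nhds hζ)).hasDerivAt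
    rwa [hode ζ hζ] at h
  have hWd : ∀ ζ ∈ Set.Ioi (0:ℝ), HasDerivAt w (deriv w ζ) ζ := fun ζ hζ =>
    (hw.differentiableAt (Ioi_mem_nhds hζ)).hasDerivAt
  have hyg : ∀ ζ ∈ Set.Ioi (0:ℝ),
      y =ᶠ[nhds ζ] (fun x => x ^ (-(1:ℝ)/2) * deriv w x) := fun ζ hζ =>
    Filter.eventuallyEq_of_mem (Ioi_mem_nhds hζ) (fun x hx => hy x hx)
  have hYd : ∀ ζ ∈ Set.Ioi (0:ℝ), HasDerivAt y (f1 ζ) ζ := by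
    intro ζ hζ
    have hne : ζ ≠ 0 := ne_of_gt hζ
    have hr : HasDerivAt (fun x : ℝ => x ^ (-(1:ℝ)/2))
        ((-(1:ℝ)/2) * ζ ^ (-(1:ℝ)/2 - 1)) ζ :=
      Real.hasDerivAt_rpow_const (Or.inl hne)
    have := hr.mul (hWdd ζ hζ)
    exact HasDerivAt.congr_of_eventuallyEq this (hyg ζ hζ)
  have hYd' : ∀ ζ ∈ Set.Ioi (0:ℝ), deriv y ζ = f1 ζ := fun ζ hζ => (hYd ζ hζ).deriv
  constructor
  · exact fun ζ hζ => ((hYd ζ hζ).differentiableAt).differentiableWithinAt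
  -- second derivative of f1
  have hF1d : ∀ ζ ∈ Set.Ioi (0:ℝ), HasDerivAt f1
      ((-(1:ℝ)/2) * ((-(1:ℝ)/2 - 1) * ζ ^ (-(1:ℝ)/2 - 1 - 1)) * deriv w ζ
        + (-(1:ℝ)/2) * ζ ^ (-(1:ℝ)/2 - 1) * (u^2 * ζ * w ζ)
        + (((-(1:ℝ)/2) * ζ ^ (-(1:ℝ)/2 - 1)) * (u^2 * ζ * w ζ)
            + ζ ^ (-(1:ℝ)/2) * (u^2 * w ζ + u^2 * ζ * deriv w ζ))) ζ := by
    intro ζ hζ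
    have hne : ζ ≠ 0 := ne_of_gt hζ
    have hr1 : HasDerivAt (fun x : ℝ => x ^ (-(1:ℝ)/2 - 1))
        ((-(1:ℝ)/2 - 1) * ζ ^ (-(1:ℝ)/2 - 1 - 1)) ζ :=
      Real.hasDerivAt_rpow_const (Or.inl hne)
    have hr2 : HasDerivAt (fun x : ℝ => x ^ (-(1:ℝ)/2))
        ((-(1:ℝ)/2) * ζ ^ (-(1:ℝ)/2 - 1)) ζ :=
      Real.hasDerivAt_rpow_const (Or.inl hne)
    have hu2 : HasDerivAt (fun x : ℝ => u^2 * x * w x)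
        (u^2 * w ζ + u^2 * ζ * deriv w ζ) ζ := by
      have := ((hasDerivAt_id ζ).const_mul (u^2)).mul (hWd ζ hζ)
      refine this.congr_deriv ?_
      simp only [id_eq]
      ring
    have h1 := ((hr1.const_mul (-(1:ℝ)/2)).mul (hWdd ζ hζ))
    have h2 := (hr2.mul hu2)
    exact h1.add h2
  have hYdd : ∀ ζ ∈ Set.Ioi (0:ℝ), HasDerivAt (deriv y)
      ((-(1:ℝ)/2) * ((-(1:ℝ)/2 - 1) * ζ ^ (-(1:ℝ)/2 - 1 - 1)) * deriv w ζ
        + (-(1:ℝ)/2) * ζ ^ (-(1:ℝ)/2 - 1) * (u^2 * ζ * w ζ)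
        + (((-(1:ℝ)/2) * ζ ^ (-(1:ℝ)/2 - 1)) * (u^2 * ζ * w ζ)
            + ζ ^ (-(1:ℝ)/2) * (u^2 * w ζ + u^2 * ζ * deriv w ζ))) ζ := by
    intro ζ hζ
    refine (hF1d ζ hζ).congr_of_eventuallyEq ?_
    exact Filter.eventuallyEq_of_mem (Ioi_mem_nhds hζ) (fun x hx => hYd' x hx)
  refine ⟨fun ζ hζ => ((hYdd ζ hζ).differentiableAt).differentiableWithinAt, ?_⟩
  intro ζ hζ
  have hζ0 : (0:ℝ) < ζ := hζ
  have hne : ζ ≠ 0 := ne_of_gt hζ0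
  rw [(hYdd ζ hζ).deriv, hy ζ hζ]
  have e1 : ζ ^ (-(1:ℝ)/2 - 1) = ζ ^ (-(1:ℝ)/2) / ζ := Real.rpow_sub_one hne _
  have e2 : ζ ^ (-(1:ℝ)/2 - 1 - 1) = ζ ^ (-(1:ℝ)/2) / ζ / ζ := by
    rw [Real.rpow_sub_one hne, e1]
  rw [e1, e2]
  field_simp
  ring
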